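/- (Duality formula) Let g ∈ L^∞(X) with g ≥ 0, and let μ be a countably additive H-valued measure on X with finite total variation, with Radon–Nikodym decomposition μ = h γ + μ^s (h ∈ L¹_γ(X; H), μ^s singular with respect to γ). Then ∫_X √(g² + |h|²_H) dγ + |μ^s|(X) = sup{ ∫_X [Φ, dμ]_H + ∫_X g ξ dγ : Φ ∈ L¹_μ(X, H), ξ ∈ L¹_μ(X), |Φ|²_H + |ξ|² ≤ 1 a.e. in X }. -/

import Mathlib

open MeasureTheory ProbabilityTheory Filter Topology Set
open scoped ENNReal RealInnerProductSpace symmDiff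

noncomputable section

variable {X : Type*} [NormedAddCommGroup X] [NormedSpace ℝ X] [MeasurableSpace X] [BorelSpace X]
  [CompleteSpace X] [SecondCountableTopology X]
variable {H : Type*} [NormedAddCommGroup H] [InnerProductSpace ℝ H] [CompleteSpace H]

/-- `γ` is a centered Gaussian measure: a probability measure whose pushforward under every
continuous linear functional is a centered Gaussian on `ℝ`. -/
def IsCenteredGaussian (γ : Measure X) : Prop :=
  IsProbabilityMeasure γ ∧ ∀ L : X →L[ℝ] ℝ, ∃ v : NNReal, γ.map L = gaussianReal 0 v

/-- Non-degenerate centered Gaussian measure. -/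
def IsNondegGaussian (γ : Measure X) : Prop :=
  IsCenteredGaussian γ ∧ ∀ L : X →L[ℝ] ℝ, L ≠ 0 → γ.map L ≠ gaussianReal 0 0

/-- The reproducing kernel `𝓗`: the closure in `L²_γ(X)` of the continuous linear functionals. -/
def reprKernel (γ : Measure X) : Set (Lp ℝ 2 γ) :=
  closure {f : Lp ℝ 2 γ | ∃ L : X →L[ℝ] ℝ, (f : X → ℝ) =ᵐ[γ] fun x => L x}

/-- The map `R : 𝓗 → X`, `R ĥ = ∫ x ĥ(x) dγ` (Bochner integral). -/
def RMap (γ : Measure X) (f : Lp ℝ 2 γ) : X := ∫ x, f x • x ∂γ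

/-- Data describing the Cameron–Martin space `H = R(𝓗)` of the Wiener space `(X, γ)`:
`T : H → 𝓗 ⊆ L²_γ(X)` is the isometry `h ↦ ĥ` (so that `[h₁,h₂]_H = ⟨ĥ₁,ĥ₂⟩_{L²}` and
`R ĥ = h`), together with a fixed orthonormal basis `h_i = Q x_i*` of `H` and the associated
functionals `x_i* ∈ X*`. -/
structure WienerBasis (γ : Measure X) (H : Type*) [NormedAddCommGroup H]
    [InnerProductSpace ℝ H] where
  T : H →ₗᵢ[ℝ] Lp ℝ 2 γ
  mem_T : ∀ h : H, T h ∈ reprKernel γ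
  surj_T : ∀ f ∈ reprKernel γ, ∃ h : H, T h = f
  b : ℕ → H
  ortho : Orthonormal ℝ b
  complete : ⊤ ≤ (Submodule.span ℝ (Set.range b)).topologicalClosure
  xstar : ℕ → X →L[ℝ] ℝ
  hx : ∀ i, (T (b i) : X → ℝ) =ᵐ[γ] fun x => xstar i x

variable {γ : Measure X}

/-- The basis vector `h_i`, viewed as an element of `X` (via `R`). -/
def WienerBasis.dir (W : WienerBasis γ H) (i : ℕ) : X := RMap γ (W.T (W.b i))

/-- Cylindrical `C¹` bounded functions `v ∘ Π_m`. -/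
def IsCylFun (W : WienerBasis γ H) (φ : X → ℝ) : Prop :=
  ∃ (m : ℕ) (v : (Fin m → ℝ) → ℝ), ContDiff ℝ 1 v ∧ (∃ M, ∀ y, |v y| ≤ M) ∧
    ∀ x, φ x = v fun i => W.xstar i x

/-- Cylindrical `C¹` bounded vector fields: the span of `φ h`, `φ ∈ FC¹_b(X)`, `h ∈ H`. -/
def IsCylVF (W : WienerBasis γ H) (Φ : X → H) : Prop :=
  ∃ (n : ℕ) (φ : Fin n → X → ℝ) (h : Fin n → H),
    (∀ k, IsCylFun W (φ k)) ∧ ∀ x, Φ x = ∑ k, φ k x • h k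

/-- The Gaussian divergence `div_γ Φ = Σ_i ∂*_{h_i} [Φ, h_i]_H`, where
`∂*_h u = ∂u/∂h − ĥ u`. -/
def divG (W : WienerBasis γ H) (Φ : X → H) (x : X) : ℝ :=
  ∑' i, (lineDeriv ℝ (fun y => ⟪Φ y, W.b i⟫) x (W.dir i)
          - (W.T (W.b i) : X → ℝ) x * ⟪Φ x, W.b i⟫)

/-- The Gaussian total variation
`|D_γ u|(X) = sup {∫ u div_γ Φ dγ : Φ ∈ FC¹_b(X,H), |Φ|_H ≤ 1}`. -/
def gaussTV (W : WienerBasis γ H) (u : X → ℝ) : ℝ≥0∞ :=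
  ⨆ Φ : {Φ : X → H // IsCylVF W Φ ∧ ∀ x, ‖Φ x‖ ≤ 1},
    ENNReal.ofReal (∫ x, u x * divG W Φ.1 x ∂γ)

/-- `u ∈ BV_γ(X)`. -/
def MemBVgauss (W : WienerBasis γ H) (u : X → ℝ) : Prop :=
  Integrable u γ ∧ gaussTV W u ≠ ⊤

/-- The Gaussian perimeter `P_γ(E) = |D_γ χ_E|(X)`. -/
def perimeterG (W : WienerBasis γ H) (E : Set X) : ℝ≥0∞ :=
  gaussTV W (E.indicator (fun _ => (1 : ℝ)))

/-- The Gaussian cumulative distribution function `Φ`. -/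
def gaussPhi (x : ℝ) : ℝ :=
  (Real.sqrt (2 * Real.pi))⁻¹ * ∫ t in Set.Iic x, Real.exp (-(t ^ 2) / 2)

/-- `α = Φ⁻¹`. -/
def gaussAlpha : ℝ → ℝ := Function.invFun gaussPhi

/-- `α = Φ⁻¹` extended to `[−∞, +∞]` (with `α(p) = −∞` for `p ≤ 0`, `α(p) = +∞` for `p ≥ 1`). -/
def gaussAlphaE (p : ℝ) : EReal :=
  if p ≤ 0 then ⊥ else if 1 ≤ p then ⊤ else (gaussAlpha p : EReal)

/-- The Gaussian isoperimetric function `𝒰 = Φ' ∘ α`. -/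
def isopU (p : ℝ) : ℝ :=
  if p ≤ 0 ∨ 1 ≤ p then 0
  else Real.exp (-(gaussAlpha p) ^ 2 / 2) / Real.sqrt (2 * Real.pi)

/-- The σ-algebra generated by the first `m` coordinates `Π_m = (x₁*, …, x_m*)`. -/
def cylSigma (W : WienerBasis γ H) (m : ℕ) : MeasurableSpace X :=
  MeasurableSpace.comap (fun x => fun i : Fin m => W.xstar i x) inferInstance

/-- The canonical cylindrical approximation `𝔼_m u` (conditional expectation given `Π_m`). -/
def condExpCyl (γ : Measure X) (W : WienerBasis γ H) (m : ℕ) (u : X → ℝ) : X → ℝ :=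
  γ[u | cylSigma W m]

/-- The Ehrhard symmetral of `E ⊆ X` along the first `m` variables (`m ≥ 1`):
`E* = {x : x_m < α(𝔼_{m−1} χ_E (x))}`. -/
def ehrhardSet (γ : Measure X) (W : WienerBasis γ H) (m : ℕ) (E : Set X) : Set X :=
  {x | ((W.xstar (m - 1) x : ℝ) : EReal)
        < gaussAlphaE (condExpCyl γ W (m - 1) (E.indicator fun _ => (1 : ℝ)) x)}

/-- The `m`-dimensional Ehrhard symmetrization of a function:
`u*(x) = inf {t : x ∉ E_t*}` where `E_t* = ({u > t})*`. -/
def ehrhardSymmFun (γ : Measure X) (W : WienerBasis γ H) (m : ℕ) (u : X → ℝ) (x : X) : ℝ :=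
  sInf {t : ℝ | x ∉ ehrhardSet γ W m {y | t < u y}}

/-- The coordinate `∂u/∂h_i` of the gradient `∇_H u`. -/
def gradCoord (W : WienerBasis γ H) (u : X → ℝ) (i : ℕ) (x : X) : ℝ :=
  lineDeriv ℝ u x (W.dir i)

/-- `G = (G_i)` is the (coordinate representation of the) gradient `∇_H u` of `u ∈ H¹_γ(X)`:
`u` is an `L²`-limit of cylindrical `C¹` bounded functions whose gradients converge to `G`
in `L²(X; H)`. -/
def HasHGradient (γ : Measure X) (W : WienerBasis γ H) (u : X → ℝ) (G : ℕ → X → ℝ) : Prop :=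
  MemLp u 2 γ ∧ ∃ un : ℕ → X → ℝ, (∀ n, IsCylFun W (un n)) ∧
    Tendsto (fun n => ∫ x, (un n x - u x) ^ 2 ∂γ) atTop (𝓝 0) ∧
    Tendsto (fun n => ∫ x, ∑' i, (gradCoord W (un n) i x - G i x) ^ 2 ∂γ) atTop (𝓝 0)

/-- `u ∈ H¹_γ(X)`, the domain of the closure of the gradient operator in `L²_γ(X)`. -/
def MemH1gauss (γ : Measure X) (W : WienerBasis γ H) (u : X → ℝ) : Prop :=
  ∃ G, HasHGradient γ W u G

/-- The Dirichlet energy `∫_X |∇_H u|²_H dγ` expressed through the coordinates `G` of `∇_H u`. -/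
def hEnergy (γ : Measure X) (G : ℕ → X → ℝ) : ℝ≥0∞ :=
  ∫⁻ x, ∑' i, ENNReal.ofReal ((G i x) ^ 2) ∂γ

/-- `(σ, f)` is the polar decomposition `D_γ u = f |D_γ u|`, `σ = |D_γ u|`, of the `H`-valued
derivative measure of `u ∈ BV_γ(X)`: it is a finite measure, `‖f‖_H = 1` `σ`-a.e., and the
integration by parts formula `∫ u ∂*_{h_i} φ dγ = −∫ φ [f, h_i]_H dσ` holds for all
cylindrical `φ`. -/
def IsGaussDeriv (γ : Measure X) (W : WienerBasis γ H) (u : X → ℝ)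
    (σ : Measure X) (f : X → H) : Prop :=
  IsFiniteMeasure σ ∧ (∀ᵐ x ∂σ, ‖f x‖ = 1) ∧ AEStronglyMeasurable f σ ∧
    ∀ (i : ℕ) (φ : X → ℝ), IsCylFun W φ →
      ∫ x, u x * (lineDeriv ℝ φ x (W.dir i) - (W.T (W.b i) : X → ℝ) x * φ x) ∂γ
        = -∫ x, φ x * ⟪f x, W.b i⟫ ∂σ

open Classical in
/-- The relaxed functional
`F̄(u) = ∫_X √(𝒰²(u) + |∇_H u|²_H) dγ + |D^s_γ u|(X)` if `u ∈ BV_γ(X)` and `0 ≤ u ≤ 1` γ-a.e.,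
`+∞` otherwise. Here `|∇_H u| = d|D_γ u|/dγ` and `|D^s_γ u| = |D_γ u| − (d|D_γ u|/dγ) γ` is the
singular part coming from the Radon–Nikodym (Lebesgue) decomposition of `D_γ u = f |D_γ u|`. -/
def Fbar (γ : Measure X) (W : WienerBasis γ H) (u : X → ℝ) : ℝ≥0∞ :=
  if h : (∀ᵐ x ∂γ, 0 ≤ u x ∧ u x ≤ 1) ∧
      ∃ σ : Measure X, ∃ f : X → H, IsGaussDeriv γ W u σ f then
    (∫⁻ x, ENNReal.ofReal
        (Real.sqrt ((isopU (u x)) ^ 2 + ((h.2.choose.rnDeriv γ x).toReal) ^ 2)) ∂γ)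
      + h.2.choose.singularPart γ Set.univ
  else ⊤

open Classical in
/-- The Allen–Cahn functional `F_ε(u) = ∫_X (ε/2 |∇_H u|²_H + W(u)/ε) dγ` for `u ∈ H¹_γ(X)`,
`+∞` otherwise. -/
def allenCahn (γ : Measure X) (W : WienerBasis γ H) (Wpot : ℝ → ℝ) (ε : ℝ) (u : X → ℝ) :
    ℝ≥0∞ :=
  if h : MemH1gauss γ W u then
    ∫⁻ x, (ENNReal.ofReal (ε / 2) * ∑' i, ENNReal.ofReal ((h.choose i x) ^ 2)
            + ENNReal.ofReal (Wpot (u x) / ε)) ∂γ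
  else ⊤

/-- Lower semicontinuous envelope (relaxation) of a functional. -/
def lscEnvelope {Y : Type*} [TopologicalSpace Y] (F : Y → ℝ≥0∞) (y : Y) : ℝ≥0∞ :=
  ⨆ G : {G : Y → ℝ≥0∞ // LowerSemicontinuous G ∧ ∀ z, G z ≤ F z}, G.1 y

/-- `Γ`-lower limit, as `ε → 0⁺`, of a family of functionals on a topological space. -/
def gammaLiminf {Y : Type*} [TopologicalSpace Y] (F : ℝ → Y → ℝ≥0∞) (y : Y) : ℝ≥0∞ :=
  ⨆ U ∈ 𝓝 y, Filter.liminf (fun ε => ⨅ z ∈ U, F ε z) (𝓝[>] (0 : ℝ))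

/-- `Γ`-upper limit, as `ε → 0⁺`, of a family of functionals on a topological space. -/
def gammaLimsup {Y : Type*} [TopologicalSpace Y] (F : ℝ → Y → ℝ≥0∞) (y : Y) : ℝ≥0∞ :=
  ⨆ U ∈ 𝓝 y, Filter.limsup (fun ε => ⨅ z ∈ U, F ε z) (𝓝[>] (0 : ℝ))

/-- `Γ`-convergence as `ε → 0⁺`. -/
def GammaConvergesTo {Y : Type*} [TopologicalSpace Y] (F : ℝ → Y → ℝ≥0∞)
    (F₀ : Y → ℝ≥0∞) : Prop :=
  ∀ y, gammaLiminf F y = F₀ y ∧ gammaLimsup F y = F₀ y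

/-- The identity map from `L²_γ(X)` with the weak topology to `L²_γ(X)`. -/
def ofWeak (γ : Measure X) : WeakSpace ℝ (Lp ℝ 2 γ) → Lp ℝ 2 γ := id

/-- A double-well potential `W` with wells at `0` and `1` and quadratic growth. -/
structure IsDoubleWell (Wpot : ℝ → ℝ) : Prop where
  smooth : ContDiff ℝ 1 Wpot
  nonneg : ∀ t, 0 ≤ Wpot t
  zero_iff : ∀ t, Wpot t = 0 ↔ t = 0 ∨ t = 1
  growth : ∃ C > 0, ∀ t, C * (t ^ 2 - 1) ≤ Wpot t



/-- Decomposition of a Bochner integral along the Lebesgue decomposition. -/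
lemma my_integral_decomp {Z : Type*} [MeasurableSpace Z] (σ γ : Measure Z)
    [IsFiniteMeasure σ] [SigmaFinite γ] (F : Z → ℝ) (hF : Integrable F σ) :
    ∫ x, F x ∂σ = ∫ x, F x ∂(σ.singularPart γ)
      + ∫ x, (σ.rnDeriv γ x).toReal * F x ∂γ := by
  haveI : IsFiniteMeasure (γ.withDensity (σ.rnDeriv γ)) :=
    ⟨lt_of_le_of_lt (Measure.le_iff'.mp (Measure.withDensity_rnDeriv_le σ γ) Set.univ)
      (measure_lt_top σ _)⟩
  have hwd : ∫ x, F x ∂(γ.withDensity (σ.rnDeriv γ))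
      = ∫ x, (σ.rnDeriv γ x).toReal * F x ∂γ := by
    rw [← MeasureTheory.integral_rnDeriv_smul (withDensity_absolutelyContinuous γ (σ.rnDeriv γ))]
    refine integral_congr_ae ?_
    filter_upwards [Measure.rnDeriv_withDensity γ (Measure.measurable_rnDeriv σ γ)] with x hx
    simp [hx, smul_eq_mul]
  calc ∫ x, F x ∂σ
      = ∫ x, F x ∂(σ.singularPart γ + γ.withDensity (σ.rnDeriv γ)) := by
        conv_lhs => rw [σ.haveLebesgueDecomposition_add γ]
    _ = _ := by
        rw [integral_add_measure (hF.mono_measure (Measure.singularPart_le σ γ))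
          (hF.mono_measure (Measure.withDensity_rnDeriv_le σ γ)), hwd]

lemma my_integrable_rnDeriv_mul {Z : Type*} [MeasurableSpace Z] (σ γ : Measure Z)
    [IsFiniteMeasure σ] [SigmaFinite γ] (F : Z → ℝ) (hF : Integrable F σ) :
    Integrable (fun x => (σ.rnDeriv γ x).toReal * F x) γ := by
  haveI : IsFiniteMeasure (γ.withDensity (σ.rnDeriv γ)) :=
    ⟨lt_of_le_of_lt (Measure.le_iff'.mp (Measure.withDensity_rnDeriv_le σ γ) Set.univ)
      (measure_lt_top σ _)⟩
  have h := (MeasureTheory.integrable_rnDeriv_smul_iff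
      (withDensity_absolutelyContinuous γ (σ.rnDeriv γ))).mpr
      (hF.mono_measure (Measure.withDensity_rnDeriv_le σ γ))
  refine h.congr ?_
  filter_upwards [Measure.rnDeriv_withDensity γ (Measure.measurable_rnDeriv σ γ)] with x hx
  simp [hx, smul_eq_mul]

lemma my_ae_imp {Z : Type*} [MeasurableSpace Z] (σ γ : Measure Z)
    [IsFiniteMeasure σ] [SigmaFinite γ] {P : Z → Prop} (h : ∀ᵐ x ∂σ, P x) :
    ∀ᵐ x ∂γ, (σ.rnDeriv γ x).toReal ≠ 0 → P x := by
  have h2 : ∀ᵐ x ∂(γ.withDensity (σ.rnDeriv γ)), P x :=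
    h.filter_mono (ae_mono (Measure.withDensity_rnDeriv_le σ γ))
  have h3 := (ae_withDensity_iff' (Measure.measurable_rnDeriv σ γ).aemeasurable).mp h2
  filter_upwards [h3] with x hx hrx
  exact hx (fun h0 => hrx (by simp [h0]))

set_option maxHeartbeats 1000000 in
/-- **Duality formula (Lemma 4.4).** Let `g ∈ L^∞(X)`, `g ≥ 0`, and let `μ ∈ 𝓜(X,H)` be given
by its polar decomposition `μ = f σ` (`σ = |μ|` finite, `‖f‖_H = 1` `σ`-a.e.), so that the
Radon–Nikodym decomposition of `μ` with respect to `γ` is `μ = h γ + μ^s` with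
`|h|_H = dσ/dγ` and `|μ^s| = σ^s`. Then
`∫_X √(g² + |h|²_H) dγ + |μ^s|(X)` equals the supremum of
`∫_X [Φ, dμ]_H + ∫_X g ξ dγ` over `Φ ∈ L¹_μ(X,H)`, `ξ ∈ L¹_μ(X)` with
`|Φ|²_H + |ξ|² ≤ 1` a.e. in `X`. -/
theorem duality_formula
    (hγ : IsNondegGaussian γ)
    (g : X → ℝ) (hg : MemLp g ⊤ γ) (hg0 : ∀ x, 0 ≤ g x)
    (σ : Measure X) (hσ : IsFiniteMeasure σ)
    (f : X → H) (hf1 : ∀ᵐ x ∂σ, ‖f x‖ = 1) (hfm : AEStronglyMeasurable f σ) :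
    (∫⁻ x, ENNReal.ofReal
        (Real.sqrt ((g x) ^ 2 + ((σ.rnDeriv γ x).toReal) ^ 2)) ∂γ)
      + σ.singularPart γ Set.univ
    = ⨆ p : {p : (X → H) × (X → ℝ) //
          AEStronglyMeasurable p.1 σ ∧ AEStronglyMeasurable p.2 γ ∧
          ∀ x, ‖p.1 x‖ ^ 2 + (p.2 x) ^ 2 ≤ 1},
        ENNReal.ofReal ((∫ x, ⟪p.1.1 x, f x⟫ ∂σ) + ∫ x, g x * p.1.2 x ∂γ) := by
  classical
  haveI pγ : IsProbabilityMeasure γ := hγ.1.1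
  set r : X → ℝ := fun x => (σ.rnDeriv γ x).toReal with hr_def
  have hrm : Measurable r := (Measure.measurable_rnDeriv σ γ).ennreal_toReal
  have hr0 : ∀ x, 0 ≤ r x := fun x => ENNReal.toReal_nonneg
  have hrint : Integrable r γ := Measure.integrable_toReal_rnDeriv
  have hgint : Integrable g γ := hg.integrable le_top
  have hsqm : AEStronglyMeasurable (fun x => Real.sqrt (g x ^ 2 + r x ^ 2)) γ := by
    have h1 : AEStronglyMeasurable (fun x => g x ^ 2 + r x ^ 2) γ := by
      have heq : (fun x => g x ^ 2 + r x ^ 2) = fun x => g x * g x + r x * r x := by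
        funext x; ring
      rw [heq]
      exact (hg.1.mul hg.1).add
        (hrm.aestronglyMeasurable.mul hrm.aestronglyMeasurable)
    exact Real.continuous_sqrt.comp_aestronglyMeasurable h1
  have hsq_nonneg : ∀ x : X, (0:ℝ) ≤ Real.sqrt (g x ^ 2 + r x ^ 2) :=
    fun x => Real.sqrt_nonneg _
  have hsq_le : ∀ x, Real.sqrt (g x ^ 2 + r x ^ 2) ≤ |g x| + r x := by
    intro x
    have h1 : g x ^ 2 + r x ^ 2 ≤ (|g x| + r x) ^ 2 := by
      nlinarith [abs_nonneg (g x), sq_abs (g x), hr0 x,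
        mul_nonneg (abs_nonneg (g x)) (hr0 x)]
    calc Real.sqrt (g x ^ 2 + r x ^ 2) ≤ Real.sqrt ((|g x| + r x) ^ 2) :=
          Real.sqrt_le_sqrt h1
      _ = |g x| + r x := Real.sqrt_sq (by positivity)
  have hsqint : Integrable (fun x => Real.sqrt (g x ^ 2 + r x ^ 2)) γ := by
    refine Integrable.mono' (hgint.abs.add hrint) hsqm ?_
    refine Filter.Eventually.of_forall fun x => ?_
    rw [Real.norm_of_nonneg (hsq_nonneg x)]
    exact hsq_le x
  have hspfin : σ.singularPart γ Set.univ ≠ ⊤ :=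
    (lt_of_le_of_lt (Measure.le_iff'.mp (Measure.singularPart_le σ γ) Set.univ)
      (measure_lt_top σ _)).ne
  have hL : (∫⁻ x, ENNReal.ofReal
        (Real.sqrt ((g x) ^ 2 + ((σ.rnDeriv γ x).toReal) ^ 2)) ∂γ)
        + σ.singularPart γ Set.univ
      = ENNReal.ofReal ((∫ x, Real.sqrt (g x ^ 2 + r x ^ 2) ∂γ)
        + (σ.singularPart γ Set.univ).toReal) := by
    rw [← ofReal_integral_eq_lintegral_ofReal hsqint
        (Filter.Eventually.of_forall hsq_nonneg),
      ENNReal.ofReal_add (integral_nonneg hsq_nonneg) ENNReal.toReal_nonneg,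
      ENNReal.ofReal_toReal hspfin]
  rw [hL]
  have hpair_norm : ∀ (Φ : X → H) (ξ : X → ℝ), (∀ x, ‖Φ x‖ ^ 2 + ξ x ^ 2 ≤ 1) →
      ∀ x, ‖Φ x‖ ≤ 1 ∧ |ξ x| ≤ 1 := by
    intro Φ ξ h x
    constructor
    · nlinarith [h x, norm_nonneg (Φ x), sq_nonneg (ξ x)]
    · nlinarith [h x, sq_nonneg ‖Φ x‖, sq_abs (ξ x), abs_nonneg (ξ x)]
  have hIi : ∀ Φ : X → H, AEStronglyMeasurable Φ σ → (∀ x, ‖Φ x‖ ≤ 1) →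
      Integrable (fun x => ⟪Φ x, f x⟫) σ := by
    intro Φ hm hb
    refine Integrable.mono' (integrable_const 1) (hm.inner hfm) ?_
    filter_upwards [hf1] with x hx
    calc ‖⟪Φ x, f x⟫‖ = |⟪Φ x, f x⟫| := rfl
      _ ≤ ‖Φ x‖ * ‖f x‖ := abs_real_inner_le_norm _ _
      _ ≤ 1 := by rw [hx, mul_one]; exact hb x
  have hgξint : ∀ ξ : X → ℝ, AEStronglyMeasurable ξ γ → (∀ x, |ξ x| ≤ 1) →
      Integrable (fun x => g x * ξ x) γ := by
    intro ξ hm hb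
    refine Integrable.mono' hgint.abs (hg.1.mul hm) ?_
    refine Filter.Eventually.of_forall fun x => ?_
    rw [Real.norm_eq_abs, abs_mul]
    calc |g x| * |ξ x| ≤ |g x| * 1 :=
          mul_le_mul_of_nonneg_left (hb x) (abs_nonneg _)
      _ = |g x| := mul_one _
  have hfr : ∀ᵐ x ∂γ, r x ≠ 0 → ‖f x‖ = 1 := my_ae_imp σ γ hf1
  have haesp : ∀ᵐ x ∂(σ.singularPart γ), ‖f x‖ = 1 :=
    hf1.filter_mono (ae_mono (Measure.singularPart_le σ γ))
  refine le_antisymm ?_ ?_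
  · -- lower bound : LHS ≤ sup, via the explicit maximizer
    obtain ⟨t, htm, ht1, ht2⟩ := Measure.mutuallySingular_singularPart σ γ
    set g' : X → ℝ := hg.1.mk g with hg'_def
    have hg'm : StronglyMeasurable g' := hg.1.stronglyMeasurable_mk
    have hgg' : g =ᵐ[γ] g' := hg.1.ae_eq_mk
    set s : X → ℝ := fun x => Real.sqrt (g' x ^ 2 + r x ^ 2) with hs_def
    have hsm : Measurable s :=
      ((hg'm.measurable.pow_const 2).add (hrm.pow_const 2)).sqrt
    set f' : X → H := fun x => if ‖f x‖ ≤ 1 then f x else 0 with hf'_def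
    have hf'le : ∀ x, ‖f' x‖ ≤ 1 := by
      intro x
      by_cases h : ‖f x‖ ≤ 1 <;> simp [hf'_def, h]
    have hff' : f =ᵐ[σ] f' := by
      filter_upwards [hf1] with x hx
      simp [hf'_def, hx]
    have hf'm : AEStronglyMeasurable f' σ := hfm.congr hff'
    set c : X → ℝ := fun x =>
        if x ∈ t then (if s x = 0 then 0 else r x / s x) else 1 with hc_def
    have hcm : Measurable c :=
      Measurable.ite htm
        (Measurable.ite (hsm (measurableSet_singleton 0)) measurable_const
          (hrm.div hsm)) measurable_const
    set ξ : X → ℝ := fun x =>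
        if x ∈ t then (if s x = 0 then 0 else g' x / s x) else 0 with hξ_def
    have hξm : Measurable ξ :=
      Measurable.ite htm
        (Measurable.ite (hsm (measurableSet_singleton 0)) measurable_const
          (hg'm.measurable.div hsm)) measurable_const
    set Φ : X → H := fun x => c x • f' x with hΦ_def
    have hΦm : AEStronglyMeasurable Φ σ := hcm.aestronglyMeasurable.smul hf'm
    have hcon : ∀ x, ‖Φ x‖ ^ 2 + ξ x ^ 2 ≤ 1 := by
      intro x
      by_cases hxt : x ∈ t
      · by_cases hsx : s x = 0
        · simp [hΦ_def, hξ_def, hc_def, hxt, hsx]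
        · have hspos : 0 < s x := lt_of_le_of_ne (Real.sqrt_nonneg _) (Ne.symm hsx)
          have hs2 : s x ^ 2 = g' x ^ 2 + r x ^ 2 := Real.sq_sqrt (by positivity)
          simp only [hΦ_def, hξ_def, hc_def, if_pos hxt, if_neg hsx]
          rw [norm_smul]
          have hn : ‖r x / s x‖ ^ 2 = (r x / s x) ^ 2 := by
            rw [Real.norm_eq_abs, sq_abs]
          have hb2 : ‖f' x‖ ^ 2 ≤ 1 := by
            nlinarith [hf'le x, norm_nonneg (f' x)]
          have h1 : (‖r x / s x‖ * ‖f' x‖) ^ 2 ≤ (r x / s x) ^ 2 := by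
            rw [mul_pow, hn]
            calc (r x / s x) ^ 2 * ‖f' x‖ ^ 2 ≤ (r x / s x) ^ 2 * 1 :=
                  mul_le_mul_of_nonneg_left hb2 (sq_nonneg _)
              _ = (r x / s x) ^ 2 := mul_one _
          have h2 : (r x / s x) ^ 2 + (g' x / s x) ^ 2 = 1 := by
            field_simp
            linarith [hs2]
          linarith [h1]
      · simp only [hΦ_def, hξ_def, hc_def, if_neg hxt, one_smul]
        nlinarith [hf'le x, norm_nonneg (f' x)]
    have hΦ1 : ∀ x, ‖Φ x‖ ≤ 1 := fun x => (hpair_norm Φ ξ hcon x).1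
    have hξ1 : ∀ x, |ξ x| ≤ 1 := fun x => (hpair_norm Φ ξ hcon x).2
    have hFi : Integrable (fun x => ⟪Φ x, f x⟫) σ := hIi Φ hΦm hΦ1
    have hA : ∫ x, ⟪Φ x, f x⟫ ∂(σ.singularPart γ)
        = (σ.singularPart γ Set.univ).toReal := by
      have hnt : ∀ᵐ x ∂(σ.singularPart γ), x ∉ t := by
        rw [ae_iff]
        simpa using ht1
      calc ∫ x, ⟪Φ x, f x⟫ ∂(σ.singularPart γ)
          = ∫ _x, (1:ℝ) ∂(σ.singularPart γ) := by
            refine integral_congr_ae ?_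
            filter_upwards [hnt, haesp] with x hxt hxf
            simp only [hΦ_def, hc_def, if_neg hxt, one_smul, hf'_def,
              if_pos (le_of_eq hxf)]
            rw [real_inner_self_eq_norm_sq, hxf, one_pow]
        _ = _ := by simp [measureReal_def]
    have hB : ∫ x, r x * ⟪Φ x, f x⟫ ∂γ + ∫ x, g x * ξ x ∂γ
        = ∫ x, Real.sqrt (g x ^ 2 + r x ^ 2) ∂γ := by
      rw [← integral_add (my_integrable_rnDeriv_mul σ γ _ hFi)
        (hgξint ξ hξm.aestronglyMeasurable hξ1)]
      refine integral_congr_ae ?_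
      have haet : ∀ᵐ x ∂γ, x ∈ t := by
        rw [ae_iff]
        simpa [Set.compl_def] using ht2
      filter_upwards [haet, hgg', hfr] with x hxt hgx hrfx
      simp only [hΦ_def, hξ_def, hc_def, if_pos hxt]
      rw [hgx]
      by_cases hsx : s x = 0
      · have h01 : g' x = 0 := by
          have h := Real.sqrt_eq_zero'.mp hsx
          nlinarith [sq_nonneg (g' x), sq_nonneg (r x)]
        have h02 : r x = 0 := by
          have h := Real.sqrt_eq_zero'.mp hsx
          nlinarith [sq_nonneg (g' x), sq_nonneg (r x)]
        simp [hsx, h01, h02]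
      · have hspos : 0 < s x := lt_of_le_of_ne (Real.sqrt_nonneg _) (Ne.symm hsx)
        have hs2 : s x ^ 2 = g' x ^ 2 + r x ^ 2 := Real.sq_sqrt (by positivity)
        simp only [if_neg hsx]
        have hinner : r x * ⟪(r x / s x) • f' x, f x⟫ = r x ^ 2 / s x := by
          by_cases hrx : r x = 0
          · simp [hrx]
          · have hfx := hrfx hrx
            rw [real_inner_smul_left]
            have hf'x : f' x = f x := by simp [hf'_def, hfx]
            rw [hf'x, real_inner_self_eq_norm_sq, hfx]
            ring
        rw [hinner]
        have hsx2 : Real.sqrt (g' x ^ 2 + r x ^ 2) = s x := rfl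
        rw [hsx2]
        field_simp
        linarith [hs2]
    refine le_iSup_of_le ⟨⟨Φ, ξ⟩, hΦm, hξm.aestronglyMeasurable, hcon⟩ (le_of_eq ?_)
    simp only
    congr 1
    rw [my_integral_decomp σ γ _ hFi, hA]
    linarith [hB]
  · -- upper bound : sup ≤ LHS
    refine iSup_le ?_
    rintro ⟨⟨Φ, ξ⟩, hΦm, hξm, hcon⟩
    simp only
    have hΦ1 : ∀ x, ‖Φ x‖ ≤ 1 := fun x => (hpair_norm Φ ξ hcon x).1
    have hξ1 : ∀ x, |ξ x| ≤ 1 := fun x => (hpair_norm Φ ξ hcon x).2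
    have hFi : Integrable (fun x => ⟪Φ x, f x⟫) σ := hIi Φ hΦm hΦ1
    refine ENNReal.ofReal_le_ofReal ?_
    rw [my_integral_decomp σ γ _ hFi]
    have h1 : ∫ x, ⟪Φ x, f x⟫ ∂(σ.singularPart γ)
        ≤ (σ.singularPart γ Set.univ).toReal := by
      have h := integral_mono_ae (hFi.mono_measure (Measure.singularPart_le σ γ))
        (integrable_const 1) ?_
      · simpa [measureReal_def] using h
      · filter_upwards [haesp] with x hx
        calc ⟪Φ x, f x⟫ ≤ ‖Φ x‖ * ‖f x‖ := real_inner_le_norm _ _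
          _ ≤ 1 := by rw [hx, mul_one]; exact hΦ1 x
    have h2 : ∫ x, r x * ⟪Φ x, f x⟫ ∂γ + ∫ x, g x * ξ x ∂γ
        ≤ ∫ x, Real.sqrt (g x ^ 2 + r x ^ 2) ∂γ := by
      rw [← integral_add (my_integrable_rnDeriv_mul σ γ _ hFi) (hgξint ξ hξm hξ1)]
      refine integral_mono_ae
        ((my_integrable_rnDeriv_mul σ γ _ hFi).add (hgξint ξ hξm hξ1)) hsqint ?_
      filter_upwards [hfr] with x hx
      have hs0 : (0:ℝ) ≤ Real.sqrt (g x ^ 2 + r x ^ 2) := Real.sqrt_nonneg _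
      have hs2 : Real.sqrt (g x ^ 2 + r x ^ 2) ^ 2 = g x ^ 2 + r x ^ 2 :=
        Real.sq_sqrt (by positivity)
      have hinner : r x * ⟪Φ x, f x⟫ ≤ r x * ‖Φ x‖ := by
        by_cases hrx : r x = 0
        · simp [hrx]
        · have hfx := hx hrx
          have hle : ⟪Φ x, f x⟫ ≤ ‖Φ x‖ := by
            calc ⟪Φ x, f x⟫ ≤ ‖Φ x‖ * ‖f x‖ := real_inner_le_norm _ _
              _ = ‖Φ x‖ := by rw [hfx, mul_one]
          exact mul_le_mul_of_nonneg_left hle (hr0 x)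
      have hgx : g x * ξ x ≤ g x * |ξ x| :=
        mul_le_mul_of_nonneg_left (le_abs_self _) (hg0 x)
      have key : r x * ‖Φ x‖ + g x * |ξ x| ≤ Real.sqrt (g x ^ 2 + r x ^ 2) := by
        nlinarith [hcon x, sq_abs (ξ x), norm_nonneg (Φ x), abs_nonneg (ξ x),
          hr0 x, hg0 x, mul_nonneg (hr0 x) (norm_nonneg (Φ x)),
          mul_nonneg (hg0 x) (abs_nonneg (ξ x)),
          sq_nonneg (r x * |ξ x| - g x * ‖Φ x‖)]
      linarith
    linarith [h1, h2]

end
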